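/- Assume additionally that σ < ∞ and A(σ) < ∞. Then G'(λ) < 0 for all λ ∈ (0, σ) if and only if the integral T(σ) := κ⁺∫_ℝ (1 − σs)a(s)e^{σs} ds converges to a finite value and m ≤ T(σ) (in which case automatically 0 < T(σ) < κ⁺). -/

import Mathlib

open MeasureTheory Real Set Filter
open scoped Topology

noncomputable section

/-- The set of positive exponents at which the bilateral Laplace transform of `f`
converges absolutely. -/
def lapSet (f : ℝ → ℝ) : Set ℝ :=
  {l : ℝ | 0 < l ∧ Integrable (fun s => f s * Real.exp (l * s))}

/-- `G(λ) = (κ⁺ A(λ) - m)/λ` where `A(λ) = ∫ a(s) e^{λ s} ds`. -/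
def Gfun (κp m : ℝ) (a : ℝ → ℝ) (l : ℝ) : ℝ :=
  (κp * (∫ s, a s * Real.exp (l * s)) - m) / l

lemma h_strictAnti : StrictAntiOn (fun x : ℝ => (1 - x) * Real.exp x) (Set.Ici 0) := by
  apply strictAntiOn_of_deriv_neg (convex_Ici 0)
  · fun_prop
  · intro x hx
    rw [interior_Ici] at hx
    have hd : HasDerivAt (fun x : ℝ => (1 - x) * Real.exp x) ((0 - 1) * Real.exp x + (1 - x) * Real.exp x) x :=
      ((hasDerivAt_const x (1:ℝ)).sub (hasDerivAt_id x)).mul (Real.hasDerivAt_exp x)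
    rw [hd.deriv]
    nlinarith [Real.exp_pos x, hx.out]

lemma h_strictMono : StrictMonoOn (fun x : ℝ => (1 - x) * Real.exp x) (Set.Iic 0) := by
  apply strictMonoOn_of_deriv_pos (convex_Iic 0)
  · fun_prop
  · intro x hx
    rw [interior_Iic] at hx
    have hd : HasDerivAt (fun x : ℝ => (1 - x) * Real.exp x) ((0 - 1) * Real.exp x + (1 - x) * Real.exp x) x :=
      ((hasDerivAt_const x (1:ℝ)).sub (hasDerivAt_id x)).mul (Real.hasDerivAt_exp x)
    rw [hd.deriv]
    nlinarith [Real.exp_pos x, hx.out]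

lemma H_lt {l1 l2 s : ℝ} (h0 : 0 ≤ l1) (hl : l1 < l2) (hs : s ≠ 0) :
    (1 - l2 * s) * Real.exp (l2 * s) < (1 - l1 * s) * Real.exp (l1 * s) := by
  rcases lt_or_gt_of_ne hs with hneg | hpos
  · exact h_strictMono (show l2 * s ∈ Set.Iic (0:ℝ) by simp; nlinarith)
      (show l1 * s ∈ Set.Iic (0:ℝ) by simp; nlinarith) (by nlinarith)
  · exact h_strictAnti (show l1 * s ∈ Set.Ici (0:ℝ) by simp; positivity)
      (show l2 * s ∈ Set.Ici (0:ℝ) by simp; nlinarith) (by nlinarith)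

lemma H_le {l1 l2 : ℝ} (h0 : 0 ≤ l1) (hl : l1 ≤ l2) (s : ℝ) :
    (1 - l2 * s) * Real.exp (l2 * s) ≤ (1 - l1 * s) * Real.exp (l1 * s) := by
  rcases eq_or_lt_of_le hl with rfl | hl'
  · exact le_refl _
  · rcases eq_or_ne s 0 with rfl | hs
    · simp
    · exact (H_lt h0 hl' hs).le

lemma int_exp {a : ℝ → ℝ} (ha_int : Integrable a) (ha_nonneg : ∀ s, 0 ≤ a s)
    {σ : ℝ} (hAσ : Integrable fun s => a s * Real.exp (σ * s))
    {l : ℝ} (h0 : 0 ≤ l) (hl : l ≤ σ) :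
    Integrable (fun s => a s * Real.exp (l * s)) := by
  apply Integrable.mono' (hAσ.add ha_int)
    (ha_int.1.mul (Real.continuous_exp.comp (continuous_const.mul continuous_id)).aestronglyMeasurable)
  filter_upwards with s
  have h1 : Real.exp (l * s) ≤ Real.exp (σ * s) + 1 := by
    rcases le_or_gt 0 s with hs | hs
    · have : Real.exp (l * s) ≤ Real.exp (σ * s) := Real.exp_le_exp.2 (by nlinarith)
      linarith [Real.exp_pos (σ * s)]
    · have : Real.exp (l * s) ≤ 1 := Real.exp_le_one_iff.2 (by nlinarith)
      linarith [Real.exp_pos (σ * s)]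
  have ha := ha_nonneg s
  simp only [Pi.mul_apply, Pi.add_apply, Function.comp_apply, id_eq, Real.norm_eq_abs]
  rw [abs_of_nonneg (by positivity)]
  nlinarith [Real.exp_pos (l * s)]

lemma abs_exp_bound {l σ s : ℝ} (h1 : 0 < l) (h2 : l < σ) :
    |s| * Real.exp (l * s) ≤ (σ - l)⁻¹ * Real.exp (σ * s) + l⁻¹ := by
  rcases le_or_gt 0 s with hs | hs
  · have h4 : s ≤ (σ - l)⁻¹ * Real.exp ((σ - l) * s) := by
      rw [inv_mul_eq_div, le_div_iff₀ (by linarith)]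
      nlinarith [Real.add_one_le_exp ((σ - l) * s)]
    have h5 : |s| * Real.exp (l * s) ≤ (σ - l)⁻¹ * Real.exp ((σ - l) * s) * Real.exp (l * s) := by
      rw [abs_of_nonneg hs]
      exact mul_le_mul_of_nonneg_right h4 (Real.exp_pos _).le
    rw [mul_assoc, ← Real.exp_add] at h5
    have heq : (σ - l) * s + l * s = σ * s := by ring
    rw [heq] at h5
    linarith [inv_nonneg.2 h1.le]
  · have h4 : -s ≤ l⁻¹ * Real.exp (-(l * s)) := by
      rw [inv_mul_eq_div, le_div_iff₀ (by linarith)]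
      nlinarith [Real.add_one_le_exp (-(l * s))]
    have h5 : |s| * Real.exp (l * s) ≤ l⁻¹ * Real.exp (-(l*s)) * Real.exp (l * s) := by
      rw [abs_of_neg hs]
      exact mul_le_mul_of_nonneg_right h4 (Real.exp_pos _).le
    rw [mul_assoc, ← Real.exp_add, neg_add_cancel, Real.exp_zero, mul_one] at h5
    have hσ : (0:ℝ) ≤ (σ - l)⁻¹ * Real.exp (σ * s) := by
      have : 0 < σ - l := by linarith
      positivity
    linarith

lemma int_s_exp {a : ℝ → ℝ} (ha_int : Integrable a) (ha_nonneg : ∀ s, 0 ≤ a s)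
    {σ : ℝ} (hAσ : Integrable fun s => a s * Real.exp (σ * s))
    {l : ℝ} (h0 : 0 < l) (hl : l < σ) :
    Integrable (fun s => s * a s * Real.exp (l * s)) := by
  apply Integrable.mono' ((hAσ.const_mul ((σ - l)⁻¹)).add (ha_int.const_mul l⁻¹))
  · exact (aestronglyMeasurable_id.mul ha_int.1).mul
      (Real.continuous_exp.comp (continuous_const.mul continuous_id)).aestronglyMeasurable
  filter_upwards with s
  have ha := ha_nonneg s
  have hb := abs_exp_bound (s := s) h0 hl
  simp only [Pi.mul_apply, Pi.add_apply, Function.comp_apply, id_eq, Real.norm_eq_abs]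
  rw [abs_mul, abs_mul, abs_of_nonneg ha, abs_of_nonneg (Real.exp_pos _).le]
  nlinarith [Real.exp_pos (σ * s), Real.exp_pos (l * s), mul_le_mul_of_nonneg_left hb ha]

lemma integral_H_lt {a : ℝ → ℝ} (ha_nonneg : ∀ s, 0 ≤ a s)
    (ha_nondeg : ∃ r ≥ (0:ℝ), ∃ ρ₀ > (0:ℝ), ∃ δ₀ > (0:ℝ),
      ∀ᵐ s ∂(volume : Measure ℝ), s ∈ Set.Icc (r - δ₀) (r + δ₀) → ρ₀ ≤ a s)
    {l1 l2 : ℝ} (h0 : 0 ≤ l1) (hl : l1 < l2)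
    (hi1 : Integrable (fun s => (1 - l1 * s) * a s * Real.exp (l1 * s)))
    (hi2 : Integrable (fun s => (1 - l2 * s) * a s * Real.exp (l2 * s))) :
    (∫ s, (1 - l2 * s) * a s * Real.exp (l2 * s)) < ∫ s, (1 - l1 * s) * a s * Real.exp (l1 * s) := by
  set d : ℝ → ℝ := fun s =>
    (1 - l1 * s) * a s * Real.exp (l1 * s) - (1 - l2 * s) * a s * Real.exp (l2 * s) with hd
  have hd_nonneg : ∀ s, 0 ≤ d s := by
    intro s
    have := H_le h0 hl.le s
    have ha := ha_nonneg s
    simp only [hd]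
    nlinarith
  have hdi : Integrable d := hi1.sub hi2
  have hpos : 0 < ∫ s, d s := by
    rw [integral_pos_iff_support_of_nonneg_ae (Filter.Eventually.of_forall hd_nonneg) hdi]
    obtain ⟨r, hr, ρ₀, hρ, δ₀, hδ, hae⟩ := ha_nondeg
    by_contra hns
    push_neg at hns
    have hns0 : volume (Function.support d) = 0 := le_antisymm hns zero_le
    have hae2 : ∀ᵐ s ∂(volume : Measure ℝ), d s = 0 := by
      have := measure_eq_zero_iff_ae_notMem.mp hns0
      filter_upwards [this] with s hs
      simpa [Function.mem_support] using hs
    have hbad : ∀ᵐ s ∂(volume : Measure ℝ), s ∉ Set.Icc (r - δ₀) (r + δ₀) \ {0} := by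
      filter_upwards [hae, hae2] with s h1 h2
      intro ⟨hmem, hs0⟩
      have hρ₀ : ρ₀ ≤ a s := h1 hmem
      have hlt := H_lt (s := s) h0 hl (by simpa using hs0)
      have : 0 < d s := by
        simp only [hd]
        nlinarith
      linarith [h2 ▸ this]
    have hz : volume (Set.Icc (r - δ₀) (r + δ₀) \ {0}) = 0 :=
      measure_eq_zero_iff_ae_notMem.mpr hbad
    rw [measure_diff_null (measure_singleton 0), Real.volume_Icc] at hz
    simp at hz
    linarith
  rw [integral_sub hi1 hi2] at hpos
  linarith

lemma hasDerivAt_A {a : ℝ → ℝ} (ha_int : Integrable a) (ha_nonneg : ∀ s, 0 ≤ a s)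
    {σ : ℝ} (hAσ : Integrable fun s => a s * Real.exp (σ * s))
    {l : ℝ} (hl : l ∈ Set.Ioo (0:ℝ) σ) :
    HasDerivAt (fun l => ∫ s, a s * Real.exp (l * s)) (∫ s, s * a s * Real.exp (l * s)) l := by
  obtain ⟨hl0, hlσ⟩ := hl
  set c : ℝ := min l (σ - l) / 2 with hc
  have hc0 : 0 < c := by
    have : 0 < min l (σ - l) := lt_min hl0 (by linarith)
    positivity
  have key := hasDerivAt_integral_of_dominated_loc_of_deriv_le (F := fun x s => a s * Real.exp (x * s))
    (F' := fun x s => s * (a s * Real.exp (x * s)))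
    (bound := fun s => c⁻¹ * (a s * Real.exp (σ * s)) + c⁻¹ * a s)
    (μ := volume) (x₀ := l) (Metric.ball_mem_nhds l hc0)
    (Filter.Eventually.of_forall fun x =>
      ha_int.1.mul (Real.continuous_exp.comp (continuous_const.mul continuous_id)).aestronglyMeasurable)
    (int_exp ha_int ha_nonneg hAσ hl0.le hlσ.le)
    (aestronglyMeasurable_id.mul
      (ha_int.1.mul (Real.continuous_exp.comp (continuous_const.mul continuous_id)).aestronglyMeasurable))
    ?_ ?_ ?_
  · have heq : (∫ s, s * (a s * Real.exp (l * s))) = ∫ s, s * a s * Real.exp (l * s) :=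
      integral_congr_ae (by filter_upwards with s; ring_nf)
    exact heq ▸ key.2
  · filter_upwards with s
    intro x hx
    rw [Metric.mem_ball, Real.dist_eq] at hx
    have hx1 : c ≤ x := by
      have h1 : min l (σ - l) ≤ l := min_le_left _ _
      have := abs_lt.1 hx
      simp only [hc] at *
      linarith
    have hx2 : c ≤ σ - x := by
      have h1 : min l (σ - l) ≤ σ - l := min_le_right _ _
      have := abs_lt.1 hx
      simp only [hc] at *
      linarith
    have hx0 : 0 < x := lt_of_lt_of_le hc0 hx1
    have hxσ : x < σ := by linarith
    have hb : |s| * Real.exp (x * s) ≤ (σ - x)⁻¹ * Real.exp (σ * s) + x⁻¹ := abs_exp_bound hx0 hxσ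
    have ha := ha_nonneg s
    have hmono1 : (σ - x)⁻¹ ≤ c⁻¹ := inv_anti₀ hc0 hx2
    have hmono2 : x⁻¹ ≤ c⁻¹ := inv_anti₀ hc0 hx1
    rw [Real.norm_eq_abs, abs_mul, abs_mul, abs_of_nonneg ha, abs_of_nonneg (Real.exp_pos _).le]
    have h2 : |s| * Real.exp (x * s) ≤ c⁻¹ * Real.exp (σ * s) + c⁻¹ := by
      have := Real.exp_pos (σ * s)
      nlinarith
    nlinarith [mul_le_mul_of_nonneg_left h2 ha, Real.exp_pos (σ * s), Real.exp_pos (x * s)]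
  · exact (hAσ.const_mul _).add (ha_int.const_mul _)
  · filter_upwards with s
    intro x hx
    have h1 : HasDerivAt (fun x : ℝ => x * s) s x := by
      simpa using (hasDerivAt_id x).mul_const s
    have h2 : HasDerivAt (fun x : ℝ => Real.exp (x * s)) (Real.exp (x * s) * s) x := h1.exp
    have h3 := h2.const_mul (a s)
    show HasDerivAt (fun x => a s * Real.exp (x * s)) (s * (a s * Real.exp (x * s))) x
    refine h3.congr_deriv ?_
    ring

theorem Gprime_neg_iff
    (κp m : ℝ) (hm : 0 < m) (hκ : m < κp)
    (a : ℝ → ℝ) (ha_int : Integrable a) (ha_nonneg : ∀ s, 0 ≤ a s)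
    (ha_one : (∫ s, a s) = 1) (ha_bdd : ∃ C, ∀ s, a s ≤ C)
    (ha_mom : Integrable (fun s => s * a s))
    (ha_nondeg : ∃ r ≥ (0:ℝ), ∃ ρ₀ > (0:ℝ), ∃ δ₀ > (0:ℝ),
      ∀ᵐ s ∂(volume : Measure ℝ), s ∈ Set.Icc (r - δ₀) (r + δ₀) → ρ₀ ≤ a s)
    (σ : ℝ) (hσ_pos : 0 < σ) (hσ_lub : IsLUB (lapSet a) σ)
    (hAσ : Integrable fun s => a s * Real.exp (σ * s)) :
    ((∀ l ∈ Set.Ioo (0:ℝ) σ, deriv (Gfun κp m a) l < 0) ↔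
      (Integrable (fun s => (1 - σ * s) * a s * Real.exp (σ * s)) ∧
        m ≤ κp * ∫ s, (1 - σ * s) * a s * Real.exp (σ * s))) ∧
    ((∀ l ∈ Set.Ioo (0:ℝ) σ, deriv (Gfun κp m a) l < 0) →
      0 < κp * (∫ s, (1 - σ * s) * a s * Real.exp (σ * s)) ∧
      κp * (∫ s, (1 - σ * s) * a s * Real.exp (σ * s)) < κp) := by
  have hκp : 0 < κp := hm.trans hκ
  set A : ℝ → ℝ := fun l => ∫ s, a s * Real.exp (l * s) with hA
  set B : ℝ → ℝ := fun l => ∫ s, s * a s * Real.exp (l * s) with hB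
  set Φ : ℝ → ℝ := fun l => ∫ s, (1 - l * s) * a s * Real.exp (l * s) with hΦdef
  -- integrability on (0,σ)
  have hΦint : ∀ l ∈ Set.Ioo (0:ℝ) σ, Integrable (fun s => (1 - l * s) * a s * Real.exp (l * s)) := by
    intro l hl
    have h1 := int_exp ha_int ha_nonneg hAσ hl.1.le hl.2.le
    have h2 := (int_s_exp ha_int ha_nonneg hAσ hl.1 hl.2).const_mul l
    have := h1.sub h2
    apply this.congr
    filter_upwards with s
    simp only [Pi.sub_apply]; ring
  have hΦeq : ∀ l ∈ Set.Ioo (0:ℝ) σ, Φ l = A l - l * B l := by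
    intro l hl
    have h1 := int_exp ha_int ha_nonneg hAσ hl.1.le hl.2.le
    have h2 := int_s_exp ha_int ha_nonneg hAσ hl.1 hl.2
    have : Φ l = ∫ s, (a s * Real.exp (l * s) - l * (s * a s * Real.exp (l * s))) := by
      simp only [hΦdef]
      apply integral_congr_ae
      filter_upwards with s; ring
    rw [this, integral_sub h1 (h2.const_mul l), integral_const_mul]
  -- derivative formula
  have hderiv : ∀ l ∈ Set.Ioo (0:ℝ) σ,
      deriv (Gfun κp m a) l = (m - κp * (A l - l * B l)) / l ^ 2 := by
    intro l hl
    have hAd := hasDerivAt_A ha_int ha_nonneg hAσ hl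
    have hnum : HasDerivAt (fun l => κp * A l - m) (κp * B l) l := (hAd.const_mul κp).sub_const m
    have hden : HasDerivAt (fun l : ℝ => l) 1 l := hasDerivAt_id l
    have hG := hnum.div hden (ne_of_gt hl.1)
    have hGfun : Gfun κp m a = fun l => (κp * A l - m) / l := rfl
    rw [hGfun, show (fun l => (κp * A l - m) / l) = ((fun l => κp * A l - m) / fun l => l) from rfl, hG.deriv]
    field_simp
    ring
  -- key equivalence pointwise
  have hcond : ∀ l ∈ Set.Ioo (0:ℝ) σ, (deriv (Gfun κp m a) l < 0 ↔ m < κp * Φ l) := by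
    intro l hl
    rw [hderiv l hl, hΦeq l hl, div_lt_iff₀ (pow_pos hl.1 2), zero_mul, sub_neg]
  have hmain : (∀ l ∈ Set.Ioo (0:ℝ) σ, deriv (Gfun κp m a) l < 0) ↔
      (∀ l ∈ Set.Ioo (0:ℝ) σ, m < κp * Φ l) := by
    constructor <;> intro h l hl
    · exact (hcond l hl).1 (h l hl)
    · exact (hcond l hl).2 (h l hl)
  clear_value A B Φ
  -- pointwise bound for the negative part
  have hqle : ∀ l : ℝ, 0 ≤ l → ∀ s, max (-s) 0 * a s * Real.exp (l * s) ≤ |s * a s| := by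
    intro l hl0 s
    have ha := ha_nonneg s
    rcases le_or_gt s 0 with hs | hs
    · rw [max_eq_left (by linarith)]
      have he : Real.exp (l * s) ≤ 1 := Real.exp_le_one_iff.2 (by nlinarith)
      have : |s * a s| = -s * a s := by
        rw [abs_mul, abs_of_nonneg ha, abs_of_nonpos hs]
      rw [this]
      nlinarith [Real.exp_pos (l * s), mul_le_mul_of_nonneg_left he (mul_nonneg (neg_nonneg.2 hs) ha)]
    · rw [max_eq_right (by linarith)]
      simp [abs_nonneg]
      positivity
  have hqint : ∀ l : ℝ, 0 ≤ l → Integrable (fun s => max (-s) 0 * a s * Real.exp (l * s)) := by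
    intro l hl0
    apply Integrable.mono' ha_mom.abs
    · exact ((Continuous.aestronglyMeasurable (by fun_prop : Continuous fun s : ℝ => max (-s) 0)).mul
        ha_int.1).mul
        (Real.continuous_exp.comp (continuous_const.mul continuous_id)).aestronglyMeasurable
    · filter_upwards with s
      have h1 := hqle l hl0 s
      have ha := ha_nonneg s
      rw [Real.norm_eq_abs, abs_of_nonneg
        (mul_nonneg (mul_nonneg (le_max_right (-s) 0) (ha_nonneg s)) (Real.exp_pos _).le)]
      exact h1
  have hqbound : ∀ l : ℝ, 0 ≤ l → (∫ s, max (-s) 0 * a s * Real.exp (l * s)) ≤ ∫ s, |s * a s| := by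
    intro l hl0
    exact integral_mono (hqint l hl0) ha_mom.abs (hqle l hl0)
  have hA0 : 0 ≤ A σ := by
    simp only [hA]
    exact integral_nonneg fun s => mul_nonneg (ha_nonneg s) (Real.exp_pos _).le
  -- the forward direction
  have hforward : (∀ l ∈ Set.Ioo (0:ℝ) σ, m < κp * Φ l) →
      Integrable (fun s => (1 - σ * s) * a s * Real.exp (σ * s)) ∧
        m ≤ κp * ∫ s, (1 - σ * s) * a s * Real.exp (σ * s) := by
    intro hT
    have hAle : ∀ l ∈ Set.Ioo (0:ℝ) σ, A l ≤ A σ + 1 := by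
      intro l hl
      simp only [hA]
      have hmono : ∀ s, a s * Real.exp (l * s) ≤ a s * Real.exp (σ * s) + a s := by
        intro s
        have ha := ha_nonneg s
        rcases le_or_gt 0 s with hs | hs
        · have : Real.exp (l * s) ≤ Real.exp (σ * s) := Real.exp_le_exp.2 (by nlinarith [hl.2])
          nlinarith
        · have : Real.exp (l * s) ≤ 1 := Real.exp_le_one_iff.2 (by nlinarith [hl.1])
          nlinarith [Real.exp_pos (σ * s)]
      calc (∫ s, a s * Real.exp (l * s)) ≤ ∫ s, (a s * Real.exp (σ * s) + a s) :=
            integral_mono (int_exp ha_int ha_nonneg hAσ hl.1.le hl.2.le) (hAσ.add ha_int) hmono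
        _ = (∫ s, a s * Real.exp (σ * s)) + 1 := by rw [integral_add hAσ ha_int, ha_one]
    set M : ℝ := ∫ s, |s * a s| with hM
    set C : ℝ := (A σ + 1) / (σ / 2) + M with hC
    set L : ℕ → ℝ := fun n => σ - σ / 2 * (1 / ((n : ℝ) + 1)) with hL
    clear_value M C L
    have hLlow : ∀ n, σ / 2 ≤ L n := by
      intro n
      have h1 : 1 / ((n : ℝ) + 1) ≤ 1 := by
        rw [div_le_one (by positivity)]
        linarith [(Nat.cast_nonneg n : (0:ℝ) ≤ (n:ℝ))]
      have h2 : (0:ℝ) < 1 / ((n : ℝ) + 1) := by positivity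
      simp only [hL]
      nlinarith [mul_le_mul_of_nonneg_left h1 (by positivity : (0:ℝ) ≤ σ / 2)]
    have hLhigh : ∀ n, L n < σ := by
      intro n
      have h2 : (0:ℝ) < 1 / ((n : ℝ) + 1) := by positivity
      simp only [hL]
      nlinarith
    have hL0 : ∀ n, 0 < L n := fun n => lt_of_lt_of_le (half_pos hσ_pos) (hLlow n)
    have hLmem : ∀ n, L n ∈ Set.Ioo (0:ℝ) σ := fun n => ⟨hL0 n, hLhigh n⟩
    have hLtend : Tendsto L atTop (𝓝 σ) := by
      have h0 := tendsto_one_div_add_atTop_nhds_zero_nat (𝕜 := ℝ)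
      have := (h0.const_mul (σ / 2)).const_sub σ
      simpa [hL] using this
    have hBle : ∀ n, B (L n) ≤ (A σ + 1) / (σ / 2) := by
      intro n
      have hTn := hT (L n) (hLmem n)
      rw [hΦeq (L n) (hLmem n)] at hTn
      have hAl := hAle (L n) (hLmem n)
      rcases le_or_gt (B (L n)) 0 with h | h
      · apply le_trans h
        apply div_nonneg (by linarith) (by linarith)
      · rw [le_div_iff₀ (half_pos hσ_pos), ← mul_le_mul_iff_right₀ hκp]
        have h6 : κp * (σ / 2 * B (L n)) ≤ κp * (L n * B (L n)) :=
          mul_le_mul_of_nonneg_left (mul_le_mul_of_nonneg_right (hLlow n) h.le) hκp.le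
        have h7 : κp * A (L n) ≤ κp * (A σ + 1) := mul_le_mul_of_nonneg_left hAl hκp.le
        nlinarith [h6, h7, hTn, hm]
    have hpint : ∀ n, Integrable (fun s => max s 0 * a s * Real.exp (L n * s)) := by
      intro n
      have h1 := (int_s_exp ha_int ha_nonneg hAσ (hL0 n) (hLhigh n)).add (hqint (L n) (hL0 n).le)
      apply h1.congr
      filter_upwards with s
      have h := max_zero_sub_eq_self s
      simp only [Pi.add_apply]
      linear_combination (-(a s * Real.exp (L n * s))) * h
    have hpbound : ∀ n, (∫ s, max s 0 * a s * Real.exp (L n * s)) ≤ C := by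
      intro n
      have hpeq : (∫ s, max s 0 * a s * Real.exp (L n * s))
          = B (L n) + ∫ s, max (-s) 0 * a s * Real.exp (L n * s) := by
        simp only [hB]
        rw [← integral_add (int_s_exp ha_int ha_nonneg hAσ (hL0 n) (hLhigh n))
          (hqint (L n) (hL0 n).le)]
        apply integral_congr_ae
        filter_upwards with s
        have h := max_zero_sub_eq_self s
        linear_combination (a s * Real.exp (L n * s)) * h
      rw [hpeq, hC]
      have := hqbound (L n) (hL0 n).le
      have := hBle n
      linarith
    -- Fatou
    have hptend : ∀ s, Tendsto (fun n => max s 0 * a s * Real.exp (L n * s)) atTop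
        (𝓝 (max s 0 * a s * Real.exp (σ * s))) := by
      intro s
      have hc : Continuous fun l : ℝ => max s 0 * a s * Real.exp (l * s) := by fun_prop
      exact (hc.tendsto σ).comp hLtend
    have haem : ∀ n, AEMeasurable (fun s => max s 0 * a s * Real.exp (L n * s))
        (volume : Measure ℝ) := by
      intro n
      exact (((continuous_id.max continuous_const).aemeasurable).mul ha_int.aemeasurable).mul
        ((Real.continuous_exp.comp (continuous_const.mul continuous_id)).aemeasurable)
    have hfatou : (∫⁻ s, ENNReal.ofReal (max s 0 * a s * Real.exp (σ * s))) ≤ ENNReal.ofReal C := by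
      have heq : ∀ s, ENNReal.ofReal (max s 0 * a s * Real.exp (σ * s))
          = Filter.liminf (fun n => ENNReal.ofReal (max s 0 * a s * Real.exp (L n * s))) atTop := by
        intro s
        exact ((ENNReal.continuous_ofReal.tendsto _).comp (hptend s)).liminf_eq.symm
      calc (∫⁻ s, ENNReal.ofReal (max s 0 * a s * Real.exp (σ * s)))
          = ∫⁻ s, Filter.liminf
              (fun n => ENNReal.ofReal (max s 0 * a s * Real.exp (L n * s))) atTop :=
            lintegral_congr heq
        _ ≤ Filter.liminf
              (fun n => ∫⁻ s, ENNReal.ofReal (max s 0 * a s * Real.exp (L n * s))) atTop :=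
            lintegral_liminf_le' (fun n => (haem n).ennreal_ofReal)
        _ ≤ ENNReal.ofReal C := by
            have hev : ∀ n, (∫⁻ s, ENNReal.ofReal (max s 0 * a s * Real.exp (L n * s)))
                ≤ ENNReal.ofReal C := by
              intro n
              rw [← ofReal_integral_eq_lintegral_ofReal (hpint n)
                (Filter.Eventually.of_forall fun s => mul_nonneg
                  (mul_nonneg (le_max_right s 0) (ha_nonneg s)) (Real.exp_pos _).le)]
              exact ENNReal.ofReal_le_ofReal (hpbound n)
            calc Filter.liminf
                  (fun n => ∫⁻ s, ENNReal.ofReal (max s 0 * a s * Real.exp (L n * s))) atTop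
                ≤ Filter.liminf (fun _ : ℕ => ENNReal.ofReal C) atTop :=
                  Filter.liminf_le_liminf (Filter.Eventually.of_forall hev)
              _ = ENNReal.ofReal C := Filter.liminf_const _
    have hp_int : Integrable (fun s => max s 0 * a s * Real.exp (σ * s)) := by
      constructor
      · exact (((continuous_id.max continuous_const).aestronglyMeasurable).mul ha_int.1).mul
          (Real.continuous_exp.comp (continuous_const.mul continuous_id)).aestronglyMeasurable
      · rw [hasFiniteIntegral_iff_ofReal (Filter.Eventually.of_forall fun s => mul_nonneg
            (mul_nonneg (le_max_right s 0) (ha_nonneg s)) (Real.exp_pos _).le)]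
        exact lt_of_le_of_lt hfatou ENNReal.ofReal_lt_top
    have hsint : Integrable (fun s => s * a s * Real.exp (σ * s)) := by
      have h1 := hp_int.sub (hqint σ hσ_pos.le)
      apply h1.congr
      filter_upwards with s
      have h := max_zero_sub_eq_self s
      simp only [Pi.sub_apply]
      linear_combination (a s * Real.exp (σ * s)) * h
    have hIσ : Integrable (fun s => (1 - σ * s) * a s * Real.exp (σ * s)) := by
      have h1 := hAσ.sub (hsint.const_mul σ)
      apply h1.congr
      filter_upwards with s
      simp only [Pi.sub_apply]
      ring
    refine ⟨hIσ, ?_⟩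
    -- dominated convergence along 𝓝[<] σ
    have habs1 : Integrable (fun s => |s| * (a s * Real.exp (σ * s))) := by
      apply hsint.abs.congr
      filter_upwards with s
      rw [abs_mul, abs_mul, abs_of_nonneg (ha_nonneg s), abs_of_nonneg (Real.exp_pos _).le]
      ring
    have habs2 : Integrable (fun s => |s| * a s) := by
      apply ha_mom.abs.congr
      filter_upwards with s
      rw [abs_mul, abs_of_nonneg (ha_nonneg s)]
    have hbound_int : Integrable (fun s => (1 + σ * |s|) * (a s * Real.exp (σ * s) + a s)) := by
      have h1 := (hAσ.add ha_int).add ((habs1.add habs2).const_mul σ)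
      apply h1.congr
      filter_upwards with s
      simp only [Pi.add_apply]
      ring
    have hΦtend : Tendsto (fun l => ∫ s, (1 - l * s) * a s * Real.exp (l * s)) (𝓝[<] σ)
        (𝓝 (∫ s, (1 - σ * s) * a s * Real.exp (σ * s))) := by
      apply tendsto_integral_filter_of_dominated_convergence
        (fun s => (1 + σ * |s|) * (a s * Real.exp (σ * s) + a s))
      · apply Filter.Eventually.of_forall
        intro l
        exact ((Continuous.aestronglyMeasurable
            (by fun_prop : Continuous fun s : ℝ => 1 - l * s)).mul ha_int.1).mul
          (Real.continuous_exp.comp (continuous_const.mul continuous_id)).aestronglyMeasurable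
      · have hev : ∀ᶠ l in 𝓝[<] σ, l ∈ Set.Ioo (0:ℝ) σ :=
          Ioo_mem_nhdsLT_of_mem ⟨hσ_pos, le_refl σ⟩
        filter_upwards [hev] with l hl
        apply Filter.Eventually.of_forall
        intro s
        have ha := ha_nonneg s
        have h1 : |1 - l * s| ≤ 1 + σ * |s| := by
          have hls : |l * s| ≤ σ * |s| := by
            rw [abs_mul, abs_of_nonneg hl.1.le]
            exact mul_le_mul_of_nonneg_right hl.2.le (abs_nonneg s)
          have h4 := le_abs_self (l * s)
          have h5 := neg_abs_le (l * s)
          rw [abs_le]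
          constructor <;> nlinarith
        have h2 : Real.exp (l * s) ≤ Real.exp (σ * s) + 1 := by
          rcases le_or_gt 0 s with hs | hs
          · have : Real.exp (l * s) ≤ Real.exp (σ * s) := Real.exp_le_exp.2 (by nlinarith [hl.2])
            linarith [Real.exp_pos (σ * s)]
          · have : Real.exp (l * s) ≤ 1 := Real.exp_le_one_iff.2 (by nlinarith [hl.1])
            linarith [Real.exp_pos (σ * s)]
        rw [Real.norm_eq_abs, abs_mul, abs_mul, abs_of_nonneg ha,
          abs_of_nonneg (Real.exp_pos _).le]
        have h3 : |1 - l * s| * Real.exp (l * s) ≤ (1 + σ * |s|) * (Real.exp (σ * s) + 1) :=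
          mul_le_mul h1 h2 (Real.exp_pos _).le (by positivity)
        nlinarith [mul_le_mul_of_nonneg_left h3 ha, abs_nonneg (1 - l * s),
          Real.exp_pos (l * s), Real.exp_pos (σ * s)]
      · exact hbound_int
      · apply Filter.Eventually.of_forall
        intro s
        have hc : Continuous fun l : ℝ => (1 - l * s) * a s * Real.exp (l * s) := by fun_prop
        exact (hc.tendsto σ).mono_left nhdsWithin_le_nhds
    have hev2 : ∀ᶠ l in 𝓝[<] σ, m ≤ κp * ∫ s, (1 - l * s) * a s * Real.exp (l * s) := by
      filter_upwards [Ioo_mem_nhdsLT_of_mem (⟨hσ_pos, le_refl σ⟩ : σ ∈ Set.Ioc 0 σ)] with l hl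
      have h9 := (hT l hl).le
      rw [hΦdef] at h9
      exact h9
    exact ge_of_tendsto (hΦtend.const_mul κp) hev2
  -- assemble
  have hiff : (∀ l ∈ Set.Ioo (0:ℝ) σ, deriv (Gfun κp m a) l < 0) ↔
      (Integrable (fun s => (1 - σ * s) * a s * Real.exp (σ * s)) ∧
        m ≤ κp * ∫ s, (1 - σ * s) * a s * Real.exp (σ * s)) := by
    rw [hmain]
    constructor
    · exact hforward
    · rintro ⟨hint, hmle⟩ l hl
      have hlt := integral_H_lt ha_nonneg ha_nondeg hl.1.le hl.2 (hΦint l hl) hint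
      have h2 : κp * (∫ s, (1 - σ * s) * a s * Real.exp (σ * s))
          < κp * ∫ s, (1 - l * s) * a s * Real.exp (l * s) :=
        mul_lt_mul_of_pos_left hlt hκp
      have h3 : m < κp * ∫ s, (1 - l * s) * a s * Real.exp (l * s) := lt_of_le_of_lt hmle h2
      rw [hΦdef]
      exact h3
  refine ⟨hiff, ?_⟩
  intro hd
  obtain ⟨hint, hmle⟩ := hiff.1 hd
  constructor
  · linarith
  · have h0int : Integrable (fun s => (1 - 0 * s) * a s * Real.exp (0 * s)) := by
      simpa using ha_int
    have hlt := integral_H_lt ha_nonneg ha_nondeg (le_refl (0:ℝ)) hσ_pos h0int hint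
    have h0val : (∫ s, (1 - 0 * s) * a s * Real.exp (0 * s)) = 1 := by
      simp only [zero_mul, sub_zero, Real.exp_zero, mul_one, one_mul]
      exact ha_one
    rw [h0val] at hlt
    calc κp * (∫ s, (1 - σ * s) * a s * Real.exp (σ * s)) < κp * 1 :=
          mul_lt_mul_of_pos_left hlt hκp
      _ = κp := mul_one κp

end
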